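/- Let A be a commutative ring, fix integers ℓ₁, ℓ with 1 ≤ ℓ₁ ≤ ℓ and k ∈ ℕ^ℓ with k_i > 0 for 1 ≤ i ≤ ℓ₁ and k_i = 0 for ℓ₁ < i ≤ ℓ. Work in the formal power series ring R = A[[x_1,...,x_ℓ,τ]], and write x^a (for a ∈ ℕ^ℓ) for the monomial x_1^{a_1}···x_ℓ^{a_ℓ}. Let N ∈ ℕ and let s, h_0, h_1, ..., h_N ∈ R satisfy τ^{N+1}·s = ∑_{j=0}^{N} h_j·τ^j·x^{(N+1−j)·k}. Then the monomial x^k divides s in R, i.e. there exists t ∈ R with s = x^k·t. -/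

import Mathlib

open MvPowerSeries Finsupp

lemma aux_prod_X_pow_eq_monomial {σ : Type*} {R : Type*} [CommSemiring R] [DecidableEq σ]
    {ι : Type*} (t : Finset ι) (f : ι → σ) (k : ι → ℕ) :
    ∏ i ∈ t, (MvPowerSeries.X (f i) : MvPowerSeries σ R) ^ k i =
      MvPowerSeries.monomial (∑ i ∈ t, Finsupp.single (f i) (k i)) 1 := by
  classical
  induction t using Finset.cons_induction with
  | empty => simp [MvPowerSeries.monomial_zero_one]
  | cons a t ha ih =>
      rw [Finset.prod_cons, Finset.sum_cons, ih, MvPowerSeries.X_pow_eq,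
        MvPowerSeries.monomial_mul_monomial, one_mul]

lemma aux_monomial_one_dvd {σ : Type*} {R : Type*} [CommSemiring R] [DecidableEq σ]
    (d : σ →₀ ℕ) (φ : MvPowerSeries σ R)
    (hφ : ∀ m : σ →₀ ℕ, ¬ d ≤ m → MvPowerSeries.coeff m φ = 0) :
    ∃ t : MvPowerSeries σ R, φ = MvPowerSeries.monomial d 1 * t := by
  refine ⟨show MvPowerSeries σ R from fun m => MvPowerSeries.coeff (m + d) φ, ?_⟩
  ext m
  rw [MvPowerSeries.coeff_monomial_mul]
  split_ifs with hd
  · rw [one_mul]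
    have : m - d + d = m := tsub_add_cancel_of_le hd
    show MvPowerSeries.coeff m φ = MvPowerSeries.coeff (m - d + d) φ
    rw [this]
  · exact hφ m hd

/-- formal power series form of Lemma 14.5.21.1.  In the formal power
series ring `R = A[[x₁,…,x_ℓ,τ]]` (realized as multivariate power series in the variables
indexed by `Option (Fin ℓ)`, with `τ` the variable `X none` and `x_i = X (some i)`), suppose
`τ^{N+1} · s = ∑_{j=0}^{N} h_j · τ^j · x^{(N+1−j)·k}`.  Then `x^k` divides `s`. -/
theorem kontsevich_pole_order_lemma
    {A : Type*} [CommRing A]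
    (ℓ₁ ℓ : ℕ) (h1 : 1 ≤ ℓ₁) (h2 : ℓ₁ ≤ ℓ)
    (k : Fin ℓ → ℕ)
    (hk1 : ∀ i : Fin ℓ, (i : ℕ) < ℓ₁ → 0 < k i)
    (hk2 : ∀ i : Fin ℓ, ℓ₁ ≤ (i : ℕ) → k i = 0)
    (N : ℕ)
    (s : MvPowerSeries (Option (Fin ℓ)) A)
    (h : ℕ → MvPowerSeries (Option (Fin ℓ)) A)
    (heq : (MvPowerSeries.X (none : Option (Fin ℓ))) ^ (N + 1) * s =
      ∑ j ∈ Finset.range (N + 1),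
        h j * (MvPowerSeries.X (none : Option (Fin ℓ))) ^ j *
          ∏ i : Fin ℓ, (MvPowerSeries.X (some i : Option (Fin ℓ))) ^ ((N + 1 - j) * k i)) :
    ∃ t : MvPowerSeries (Option (Fin ℓ)) A,
      s = (∏ i : Fin ℓ, (MvPowerSeries.X (some i : Option (Fin ℓ))) ^ (k i)) * t := by
  classical
  set K : Option (Fin ℓ) →₀ ℕ :=
    ∑ i : Fin ℓ, Finsupp.single (some i : Option (Fin ℓ)) (k i) with hK
  rw [aux_prod_X_pow_eq_monomial]
  apply aux_monomial_one_dvd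
  intro m hm
  -- find a coordinate where K exceeds m; it must be `some i`
  rw [Finsupp.le_def] at hm
  push_neg at hm
  obtain ⟨j, hj⟩ := hm
  have hKnone : K none = 0 := by
    rw [hK, Finsupp.finset_sum_apply]
    simp
  have hKsome : ∀ i : Fin ℓ, K (some i) = k i := by
    intro i
    rw [hK, Finsupp.finset_sum_apply]
    rw [Finset.sum_eq_single i]
    · simp
    · intro b _ hb
      rw [Finsupp.single_apply, if_neg (by simpa using hb)]
    · simp
  cases j with
  | none => rw [hKnone] at hj; omega
  | some i =>
  rw [hKsome i] at hj
  -- compute coeff m s from heq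
  have key : MvPowerSeries.coeff (Finsupp.single (none : Option (Fin ℓ)) (N + 1) + m)
      ((MvPowerSeries.X (none : Option (Fin ℓ))) ^ (N + 1) * s) = MvPowerSeries.coeff m s := by
    rw [MvPowerSeries.X_pow_eq, MvPowerSeries.coeff_add_monomial_mul, one_mul]
  rw [heq, map_sum] at key
  rw [← key]
  apply Finset.sum_eq_zero
  intro j hj'
  rw [Finset.mem_range] at hj'
  rw [aux_prod_X_pow_eq_monomial, mul_assoc, MvPowerSeries.X_pow_eq,
    MvPowerSeries.monomial_mul_monomial, one_mul, MvPowerSeries.coeff_mul_monomial]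
  rw [if_neg, ]
  intro hle
  have := hle (some i)
  rw [Finsupp.add_apply, Finsupp.add_apply, Finsupp.single_apply, Finsupp.single_apply] at this
  simp only [reduceCtorEq, if_false] at this
  have hKs : (∑ i' : Fin ℓ, Finsupp.single (some i' : Option (Fin ℓ)) ((N + 1 - j) * k i')) (some i)
      = (N + 1 - j) * k i := by
    rw [Finsupp.finset_sum_apply, Finset.sum_eq_single i]
    · simp
    · intro b _ hb
      rw [Finsupp.single_apply, if_neg (by simpa using hb)]
    · simp
  rw [hKs] at this
  have h1j : 1 ≤ N + 1 - j := by omega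
  nlinarith [this, hj]
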